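/- (Nielsen–Schreier index formula) Let k ≥ 1 and let H be a subgroup of the free group on k generators with finite index n. Then H is isomorphic (as a group) to the free group on n·(k−1)+1 generators. -/

import Mathlib

open CategoryTheory CategoryTheory.ActionCategory CategoryTheory.SingleObj Quiver FreeGroup
open IsFreeGroupoid IsFreeGroupoid.SpanningTree

noncomputable section NSaux

namespace NSIndexFormula

open scoped Classical

universe u v

section Counting

variable {V : Type u} [Quiver.{v} V] (T : WideSubquiver (Symmetrify V))
  [Arborescence (WideSubquiver.toType (Symmetrify V) T)]

private abbrev TT := WideSubquiver.toType (Symmetrify V) T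

lemma no_step_to_root {a : TT T} (p : Path (root (TT T)) a) (f : a ⟶ root (TT T)) : False := by
  have h : (p.cons f) = (default : Path (root (TT T)) (root (TT T))) := Subsingleton.elim _ _
  have h2 : (Path.nil : Path (root (TT T)) (root (TT T))) = default := Subsingleton.elim _ _
  have h3 := congrArg Path.length (h.trans h2.symm)
  simp at h3

lemma no_double_edge {a b : V} (e : a ⟶ b) (h1 : Sum.inl e ∈ T a b) (h2 : Sum.inr e ∈ T b a) :
    False := by
  let g1 : (show TT T from a) ⟶ (show TT T from b) := ⟨Sum.inl e, h1⟩
  let g2 : (show TT T from b) ⟶ (show TT T from a) := ⟨Sum.inr e, h2⟩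
  let p : Path (root (TT T)) (show TT T from a) := default
  have h : (p.cons g1).cons g2 = p := Subsingleton.elim _ _
  have h3 := congrArg Path.length h
  erw [Path.length_cons, Path.length_cons] at h3
  omega

private def fwd : {e : Total (Symmetrify V) // e.hom ∈ T e.left e.right} →
    {b : TT T // b ≠ root (TT T)} :=
  fun ⟨⟨a, b, f⟩, h⟩ => ⟨show TT T from b, by
    intro hb
    exact no_step_to_root T (default : Path (root (TT T)) (show TT T from a))
      (hb ▸ (⟨f, h⟩ : (show TT T from a) ⟶ (show TT T from b)))⟩

lemma fwd_bij : Function.Bijective (fwd T) := by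
  constructor
  · rintro ⟨⟨a, b, f⟩, h⟩ ⟨⟨a', b', f'⟩, h'⟩ hbb
    have hb : b = b' := congrArg Subtype.val hbb
    subst hb
    have hpq : ((default : Path (root (TT T)) (show TT T from a)).cons ⟨f, h⟩ :
          Path (root (TT T)) (show TT T from b)) =
        ((default : Path (root (TT T)) (show TT T from a')).cons ⟨f', h'⟩) :=
      Subsingleton.elim _ _
    have ha : (show TT T from a) = (show TT T from a') := Path.obj_eq_of_cons_eq_cons hpq
    have ha' : a = a' := ha
    subst ha'
    have hf : HEq (⟨f, h⟩ : (show TT T from a) ⟶ (show TT T from b))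
        (⟨f', h'⟩ : (show TT T from a) ⟶ (show TT T from b)) :=
      Path.hom_heq_of_cons_eq_cons hpq
    have : f = f' := congrArg Subtype.val (eq_of_heq hf)
    subst this
    rfl
  · rintro ⟨b, hb⟩
    cases hp : (default : Path (root (TT T)) b) with
    | nil => exact absurd rfl hb
    | @cons c _ p g => exact ⟨⟨⟨c, b, g.val⟩, g.property⟩, rfl⟩

private def fwd2 : {e : Total (Symmetrify V) // e.hom ∈ T e.left e.right} →
    {e : Quiver.Total V // e.hom ∈ wideSubquiverSymmetrify T e.left e.right} :=
  fun ⟨⟨a, b, f⟩, h⟩ =>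
    match f, h with
    | Sum.inl e, h => ⟨⟨a, b, e⟩, Or.inl h⟩
    | Sum.inr e, h => ⟨⟨b, a, e⟩, Or.inr h⟩

lemma fwd2_bij : Function.Bijective (fwd2 T) := by
  constructor
  · rintro ⟨⟨a, b, f⟩, h⟩ ⟨⟨a', b', f'⟩, h'⟩ hh
    match f, h, f', h', hh with
    | Sum.inl e, h, Sum.inl e', h', hh => ?_
    | Sum.inr e, h, Sum.inr e', h', hh => ?_
    | Sum.inl e, h, Sum.inr e', h', hh => ?_
    | Sum.inr e, h, Sum.inl e', h', hh => ?_
    · have ht : (⟨a, b, e⟩ : Total V) = ⟨a', b', e'⟩ := congrArg Subtype.val hh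
      injection ht with h1 h2 h3
      subst h1; subst h2; cases eq_of_heq h3; rfl
    · have ht : (⟨b, a, e⟩ : Total V) = ⟨b', a', e'⟩ := congrArg Subtype.val hh
      injection ht with h1 h2 h3
      subst h1; subst h2; cases eq_of_heq h3; rfl
    · have ht : (⟨a, b, e⟩ : Total V) = ⟨b', a', e'⟩ := congrArg Subtype.val hh
      injection ht with h1 h2 h3
      subst h1; subst h2; cases eq_of_heq h3
      exact absurd h' (fun h' => no_double_edge T e h h')
    · have ht : (⟨b, a, e⟩ : Total V) = ⟨a', b', e'⟩ := congrArg Subtype.val hh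
      injection ht with h1 h2 h3
      subst h1; subst h2; cases eq_of_heq h3
      exact absurd h (fun h => no_double_edge T e h' h)
  · rintro ⟨⟨a, b, e⟩, h⟩
    rcases h with h | h
    · exact ⟨⟨⟨a, b, Sum.inl e⟩, h⟩, rfl⟩
    · exact ⟨⟨⟨b, a, Sum.inr e⟩, h⟩, rfl⟩

lemma card_ne_root [Finite V] :
    Nat.card {b : TT T // b ≠ root (TT T)} = Nat.card V - 1 := by
  haveI : Finite (TT T) := ‹Finite V›
  classical
  haveI : Fintype (TT T) := Fintype.ofFinite _
  have h : Nat.card {b : TT T // b ≠ root (TT T)} = Nat.card (TT T) - 1 := by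
    simp [Nat.card_eq_fintype_card, Fintype.card_subtype_compl]
  rw [h]
  rfl

lemma card_symmetrified [Finite V] :
    Nat.card {e : Quiver.Total V // e.hom ∈ wideSubquiverSymmetrify T e.left e.right} =
      Nat.card V - 1 := by
  rw [← Nat.card_eq_of_bijective _ (fwd2_bij T),
      Nat.card_eq_of_bijective _ (fwd_bij T), card_ne_root T]

end Counting

section Basis

variable {G : Type u} [Groupoid.{u} G] [IsFreeGroupoid G]
  (T : WideSubquiver (Symmetrify <| Generators G)) [Arborescence T]

/-- basis version of `IsFreeGroupoid.SpanningTree.endIsFree` -/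
def endBasis :
    FreeGroupBasis ((wideSubquiverEquivSetTotal <| wideSubquiverSymmetrify T)ᶜ : Set _)
      (End (show G from root T)) :=
  FreeGroupBasis.ofUniqueLift ((wideSubquiverEquivSetTotal <| wideSubquiverSymmetrify T)ᶜ : Set _)
    (fun e => loopOfHom T (of e.val.hom))
    (by
      intro X _ f
      let f' : Labelling (Generators G) X := fun a b e =>
        if h : e ∈ wideSubquiverSymmetrify T a b then 1 else f ⟨⟨a, b, e⟩, h⟩
      rcases unique_lift f' with ⟨F', hF', uF'⟩
      refine ⟨F'.mapEnd _, ?_, ?_⟩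
      · suffices ∀ {x y} (q : x ⟶ y), F'.map (loopOfHom T q) = (F'.map q : X) by
          rintro ⟨⟨a, b, e⟩, h⟩
          erw [Functor.mapEnd_apply, this, hF']
          exact dif_neg h
        intros x y q
        suffices ∀ {a} (p : Path (root T) a), F'.map (homOfPath T p) = 1 by
          simp only [this, treeHom, comp_as_mul, inv_as_inv, loopOfHom, inv_one, mul_one,
            one_mul, Functor.map_inv, Functor.map_comp]
          erw [this, this, inv_one, one_mul, mul_one]
        intro a p
        induction' p with b c p e ih
        · rw [homOfPath]; exact F'.map_id _
        erw [homOfPath.eq_2, F'.map_comp, comp_as_mul, ih, mul_one]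
        rcases e with ⟨e | e, eT⟩
        · erw [hF']
          exact dif_pos (Or.inl eT)
        · erw [F'.map_inv, inv_as_inv, inv_eq_one, hF']
          exact dif_pos (Or.inr eT)
      · intro E hE
        ext x
        suffices (functorOfMonoidHom T E).map x = F'.map x by
          have h1 : treeHom T (show G from root T) = 𝟙 _ :=
            Eq.trans (treeHom_eq T Path.nil) rfl
          simp only [loopOfHom, functorOfMonoidHom, IsIso.inv_id, h1,
            Category.id_comp, Category.comp_id] at this
          exact ((congrArg E (Category.comp_id x)).symm.trans ((congrArg E (by erw [IsIso.inv_id, Category.comp_id, Category.id_comp])).trans this))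
        congr
        apply uF'
        intro a b e
        change E (loopOfHom T _) = dite _ _ _
        split_ifs with h
        · rw [loopOfHom_eq_id T e h, ← End.one_def]; exact E.map_one
        · exact hE ⟨⟨a, b, e⟩, h⟩)

end Basis

end NSIndexFormula

end NSaux

open NSIndexFormula in
/-- Nielsen–Schreier index formula: a subgroup of index `n` in the free group of
rank `k ≥ 1` is isomorphic to the free group of rank `n * (k - 1) + 1`. -/
theorem nielsen_schreier_index_formula (k n : ℕ) (hk : 1 ≤ k) (hn : 0 < n)
    (H : Subgroup (FreeGroup (Fin k))) (hH : H.index = n) :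
    Nonempty (H ≃* FreeGroup (Fin (n * (k - 1) + 1))) := by
  classical
  set G := FreeGroup (Fin k)
  set A := G ⧸ H with hA
  haveI : Finite A := Nat.finite_of_card_ne_zero (by
    show H.index ≠ 0
    omega)
  let Gd := ActionCategory G A
  let r0 : Gd := ActionCategory.objEquiv G A ((1 : G) : A)
  haveI : RootedConnected (show Symmetrify (Generators Gd) from r0) :=
    ⟨fun b => path_nonempty_of_hom
      (@CategoryTheory.nonempty_hom_of_preconnected_groupoid Gd _
        (inferInstanceAs (IsPreconnected (ActionCategory G A))) r0 (show Gd from b))⟩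
  let T : WideSubquiver (Symmetrify (Generators Gd)) :=
    geodesicSubtree (show Symmetrify (Generators Gd) from r0)
  letI arb : Arborescence (WideSubquiver.toType _ T) := geodesicArborescence _
  -- cardinalities
  let genEquiv : Fin k ≃ IsFreeGroup.Generators G :=
    Equiv.ofFreeGroupEquiv (IsFreeGroup.toFreeGroup G)
  haveI : Finite (IsFreeGroup.Generators G) := Finite.of_equiv _ genEquiv
  have cardGen : Nat.card (IsFreeGroup.Generators G) = k := by
    rw [Nat.card_congr genEquiv.symm, Nat.card_eq_fintype_card, Fintype.card_fin]
  haveI : Finite Gd := Finite.of_equiv _ (ActionCategory.objEquiv G A)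
  haveI : Finite (Generators Gd) := ‹Finite Gd›
  have cardGd : Nat.card Gd = n := by
    rw [← Nat.card_congr (ActionCategory.objEquiv G A)]
    exact hH
  -- counting all arrows of the generating quiver of Gd
  let tot2 : Quiver.Total (Generators Gd) → Gd × IsFreeGroup.Generators G :=
    fun t =>
      (show Gd from t.left,
       (show {e : IsFreeGroup.Generators G //
          IsFreeGroup.of e • (show Gd from t.left).back = (show Gd from t.right).back}
         from t.hom).val)
  have tot2_bij : Function.Bijective tot2 := by
    constructor
    · rintro ⟨a, b, f⟩ ⟨a', b', f'⟩ hh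
      obtain ⟨e, he⟩ := f
      obtain ⟨e', he'⟩ := f'
      have ha : a = a' := congrArg Prod.fst hh
      subst ha
      have hee : e = e' := congrArg Prod.snd hh
      subst hee
      have hb : b = b' := by
        have h1 : (show Gd from b).back = (show Gd from b').back := he.symm.trans he'
        have := (ActionCategory.objEquiv G A).symm.injective h1
        exact this
      subst hb
      rfl
    · rintro ⟨a, e⟩
      refine ⟨⟨show Generators Gd from a,
        show Generators Gd from
          ActionCategory.objEquiv G A (IsFreeGroup.of e • (a : Gd).back),
        show {e' : IsFreeGroup.Generators G // _} from ⟨e, rfl⟩⟩, rfl⟩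
  haveI : Finite (Quiver.Total (Generators Gd)) :=
    Finite.of_injective tot2 tot2_bij.injective
  have cardTot : Nat.card (Quiver.Total (Generators Gd)) = n * k := by
    rw [Nat.card_eq_of_bijective tot2 tot2_bij, Nat.card_prod, cardGd, cardGen]
  -- the basis of H
  let B0 := endBasis T
  let eH : End (show Gd from root (WideSubquiver.toType _ T)) ≃* H :=
    ActionCategory.endMulEquivSubgroup H
  let B : FreeGroupBasis _ H := B0.map eH
  -- cardinality of the basis index set
  have cardE : Nat.card
      {e : Quiver.Total (Generators Gd) //
        e.hom ∈ wideSubquiverSymmetrify T e.left e.right} = n - 1 := by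
    rw [card_symmetrified T]
    show Nat.card Gd - 1 = n - 1
    rw [cardGd]
  have cardS : Nat.card
      ((wideSubquiverEquivSetTotal <| wideSubquiverSymmetrify T)ᶜ :
        Set (Quiver.Total (Generators Gd))) = n * (k - 1) + 1 := by
    have h1 : Nat.card
        ((wideSubquiverEquivSetTotal <| wideSubquiverSymmetrify T) :
          Set (Quiver.Total (Generators Gd))) = n - 1 := cardE
    have h2 := Set.ncard_add_ncard_compl
      ((wideSubquiverEquivSetTotal <| wideSubquiverSymmetrify T) :
        Set (Quiver.Total (Generators Gd)))
    rw [Nat.card_coe_set_eq] at h1 ⊢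
    rw [cardTot, h1] at h2
    obtain ⟨k', rfl⟩ := Nat.exists_eq_add_of_le hk
    rw [Nat.mul_add, Nat.mul_one] at h2
    rw [Nat.add_sub_cancel_left]
    generalize hm : n * k' = m at h2 ⊢
    omega
  -- assemble
  haveI : Finite ((wideSubquiverEquivSetTotal <| wideSubquiverSymmetrify T)ᶜ :
      Set (Quiver.Total (Generators Gd))) := Subtype.finite
  haveI : Fintype ((wideSubquiverEquivSetTotal <| wideSubquiverSymmetrify T)ᶜ :
      Set (Quiver.Total (Generators Gd))) := Fintype.ofFinite _
  let e2 : ((wideSubquiverEquivSetTotal <| wideSubquiverSymmetrify T)ᶜ :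
      Set (Quiver.Total (Generators Gd))) ≃ Fin (n * (k - 1) + 1) :=
    Fintype.equivFinOfCardEq (by rw [← Nat.card_eq_fintype_card]; exact cardS)
  exact ⟨B.repr.trans (FreeGroup.freeGroupCongr e2)⟩
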